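/- Let a, b, c, d be positive integers with a > 1, d > c, b even, d − c even, a·(d − c) > b·|d − a|, a ≤ c, d ≥ b + c, and such that a ≤ b or d·(a − b) < a·c. Then the pair (X, Oz) associated to the real surface V = {(x,y,z) ∈ ℝ³ : y^a = z^b·x^c + x^d} is Whitney (b)-regular at the origin but is not Kuo–Verdier (w)-regular at the origin. (This gives infinitely many real algebraic examples where (b) holds but (w) fails, generalizing the three previously known examples (a,b,c,d) = (3,2,3,5), (4,2,5,7), (4,4,1,3).) -/

import Mathlib

open Filter

noncomputable section

/-- x-partial derivative of f(x,y,z) = y^a - z^b*x^c - x^d. -/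
def fxR (b c d : ℕ) (x z : ℝ) : ℝ :=
  -(c : ℝ) * z ^ b * x ^ (c - 1) - (d : ℝ) * x ^ (d - 1)

/-- y-partial derivative of f. -/
def fyR (a : ℕ) (y : ℝ) : ℝ := (a : ℝ) * y ^ (a - 1)

/-- z-partial derivative of f. -/
def fzR (b c : ℕ) (x z : ℝ) : ℝ := -(b : ℝ) * z ^ (b - 1) * x ^ c

/-- Euclidean norm on ℝ³. -/
def nrm3R (u v w : ℝ) : ℝ := Real.sqrt (u ^ 2 + v ^ 2 + w ^ 2)

/-- Euclidean norm on ℝ². -/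
def nrm2R (u v : ℝ) : ℝ := Real.sqrt (u ^ 2 + v ^ 2)

/-- Norm of the gradient ∇f(x,y,z). -/
def gradNormR (a b c d : ℕ) (x y z : ℝ) : ℝ :=
  nrm3R (fxR b c d x z) (fyR a y) (fzR b c x z)

/-- The gradient ∇f(x,y,z) is nonzero. -/
def gradNeR (a b c d : ℕ) (x y z : ℝ) : Prop :=
  ¬ (fxR b c d x z = 0 ∧ fyR a y = 0 ∧ fzR b c x z = 0)

/-- Membership in X = V \ Oz, where V = {y^a = z^b x^c + x^d} and Oz is the z-axis. -/
def inXR (a b c d : ℕ) (x y z : ℝ) : Prop :=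
  y ^ a = z ^ b * x ^ c + x ^ d ∧ ¬ (x = 0 ∧ y = 0)

/-- Whitney (a)-regularity of the pair (X, Oz) at the origin. -/
def aRegR (a b c d : ℕ) : Prop :=
  ∀ x y z : ℕ → ℝ,
    (∀ n, inXR a b c d (x n) (y n) (z n)) →
    Tendsto (fun n => (x n, y n, z n)) atTop (nhds ((0 : ℝ), (0 : ℝ), (0 : ℝ))) →
    (∀ n, gradNeR a b c d (x n) (y n) (z n)) →
    Tendsto (fun n => |fzR b c (x n) (z n)| / gradNormR a b c d (x n) (y n) (z n))
      atTop (nhds 0)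

/-- The (bᵖⁱ) condition for the retraction π(x,y,z) = (0,0,z). -/
def bpiR (a b c d : ℕ) : Prop :=
  ∀ x y z : ℕ → ℝ,
    (∀ n, inXR a b c d (x n) (y n) (z n)) →
    Tendsto (fun n => (x n, y n, z n)) atTop (nhds ((0 : ℝ), (0 : ℝ), (0 : ℝ))) →
    (∀ n, gradNeR a b c d (x n) (y n) (z n)) →
    Tendsto (fun n => |x n * fxR b c d (x n) (z n) + y n * fyR a (y n)| /
        (nrm2R (x n) (y n) * gradNormR a b c d (x n) (y n) (z n)))
      atTop (nhds 0)

/-- Whitney (b)-regularity of the pair (X, Oz) at the origin. -/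
def bRegR (a b c d : ℕ) : Prop := aRegR a b c d ∧ bpiR a b c d

/-- Kuo–Verdier (w)-regularity of the pair (X, Oz) at the origin. -/
def wRegR (a b c d : ℕ) : Prop :=
  ∃ C : ℝ, 0 < C ∧ ∃ ε : ℝ, 0 < ε ∧ ∀ x y z : ℝ,
    inXR a b c d x y z → nrm3R x y z < ε → gradNeR a b c d x y z →
    |fzR b c x z| ≤ C * nrm2R x y * gradNormR a b c d x y z


lemma abs_mid_le_nrm3 (u v w : ℝ) : |v| ≤ nrm3R u v w := by
  rw [nrm3R, ← Real.sqrt_sq_eq_abs]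
  exact Real.sqrt_le_sqrt (by nlinarith [sq_nonneg u, sq_nonneg w])

lemma nrm3_le_sum (u v w : ℝ) : nrm3R u v w ≤ |u| + |v| + |w| := by
  rw [nrm3R]
  have h : u ^ 2 + v ^ 2 + w ^ 2 ≤ (|u| + |v| + |w|) ^ 2 := by
    nlinarith [abs_nonneg u, abs_nonneg v, abs_nonneg w, sq_abs u, sq_abs v, sq_abs w,
      mul_nonneg (abs_nonneg u) (abs_nonneg v), mul_nonneg (abs_nonneg u) (abs_nonneg w),
      mul_nonneg (abs_nonneg v) (abs_nonneg w)]
  calc Real.sqrt (u ^ 2 + v ^ 2 + w ^ 2) ≤ Real.sqrt ((|u| + |v| + |w|) ^ 2) :=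
        Real.sqrt_le_sqrt h
    _ = |u| + |v| + |w| := Real.sqrt_sq (by positivity)

lemma abs_fst_le_nrm2 (u v : ℝ) : |u| ≤ nrm2R u v := by
  rw [nrm2R, ← Real.sqrt_sq_eq_abs]
  exact Real.sqrt_le_sqrt (by nlinarith [sq_nonneg v])

lemma nrm2_le_sum (u v : ℝ) : nrm2R u v ≤ |u| + |v| := by
  rw [nrm2R]
  have h : u ^ 2 + v ^ 2 ≤ (|u| + |v|) ^ 2 := by
    nlinarith [sq_abs u, sq_abs v, mul_nonneg (abs_nonneg u) (abs_nonneg v)]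
  calc Real.sqrt (u ^ 2 + v ^ 2) ≤ Real.sqrt ((|u| + |v|) ^ 2) := Real.sqrt_le_sqrt h
    _ = |u| + |v| := Real.sqrt_sq (by positivity)

lemma tendsto_of_pow_tendsto {q : ℕ → ℝ} (h0 : ∀ n, 0 ≤ q n) {k : ℕ}
    (h : Tendsto (fun n => q n ^ k) atTop (nhds 0)) : Tendsto q atTop (nhds 0) := by
  rw [Metric.tendsto_atTop] at h ⊢
  intro ε hε
  obtain ⟨N, hN⟩ := h (ε ^ k) (by positivity)
  refine ⟨N, fun n hn => ?_⟩
  have h2 := hN n hn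
  rw [Real.dist_eq, sub_zero, abs_of_nonneg (pow_nonneg (h0 n) k)] at h2
  rw [Real.dist_eq, sub_zero, abs_of_nonneg (h0 n)]
  by_contra hcon
  push_neg at hcon
  exact absurd h2 (not_lt.mpr (pow_le_pow_left₀ hε.le hcon k))

lemma mul_pow_le_add_pow {u v : ℝ} (hu : 0 ≤ u) (hv : 0 ≤ v) (m n : ℕ) :
    u ^ m * v ^ n ≤ (u + v) ^ (m + n) := by
  rw [pow_add]
  exact mul_le_mul (pow_le_pow_left₀ hu (le_add_of_nonneg_right hv) m)
    (pow_le_pow_left₀ hv (le_add_of_nonneg_left hu) n) (by positivity) (by positivity)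

lemma y_pow_abs {a b c q : ℕ} (hbe : Even b) (hqe : Even q) (x y z : ℝ)
    (hy : y ^ a = z ^ b * x ^ c + x ^ (c + q)) :
    |y| ^ a = |x| ^ c * (|z| ^ b + |x| ^ q) := by
  have hz : (0:ℝ) ≤ z ^ b + x ^ q := by
    rw [← hbe.pow_abs, ← hqe.pow_abs]; positivity
  calc |y| ^ a = |y ^ a| := (abs_pow y a).symm
    _ = |x ^ c * (z ^ b + x ^ q)| := by rw [hy]; ring_nf
    _ = |x| ^ c * (z ^ b + x ^ q) := by rw [abs_mul, abs_pow, abs_of_nonneg hz]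
    _ = |x| ^ c * (|z| ^ b + |x| ^ q) := by rw [hbe.pow_abs, hqe.pow_abs]

lemma rearr4 (P Q R S : ℝ) : (P * Q) * (R * S) = P * R * (Q * S) := by ring

set_option maxHeartbeats 1000000 in
lemma aReg_main (B G A D : ℕ) (hEv : Even (B+2)) (hEvD : Even (D+1))
    (hkey : (D+1)*(G+1) < (B+2)*(B+G+3+A)) :
    aRegR (B+G+3) (B+2) (B+G+3+A) (B+G+3+A+(D+1)) := by
  intro x y z hX hlim hgrad
  set E := (B+2)*(B+G+3+A) - (D+1)*(G+1) with hEdef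
  have hE : E + (D+1)*(G+1) = (B+2)*(B+G+3+A) := Nat.sub_add_cancel hkey.le
  have hE0 : 0 < E := Nat.sub_pos_of_lt hkey
  have key : ∀ n, (|fzR (B+2) (B+G+3+A) (x n) (z n)| /
      gradNormR (B+G+3) (B+2) (B+G+3+A) (B+G+3+A+(D+1)) (x n) (y n) (z n)) ^ ((B+G+3)*(B+2)) ≤
      ((B+2:ℝ)/(B+G+3))^((B+G+3)*(B+2)) * |x n| ^ E := by
    intro n
    obtain ⟨hyeq, hne⟩ := hX n
    have hx0 : x n ≠ 0 := by
      intro h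
      apply hne
      refine ⟨h, ?_⟩
      have h1 : y n ^ (B+G+3) = 0 := by rw [hyeq, h]; simp
      exact pow_eq_zero_iff (by omega) |>.mp h1
    have hs : 0 < |x n| := abs_pos.mpr hx0
    have hY : |y n| ^ (B+G+3) = |x n|^(B+G+3+A) * (|z n|^(B+2) + |x n|^(D+1)) :=
      y_pow_abs hEv hEvD (x n) (y n) (z n) hyeq
    set W := |z n|^(B+2) + |x n|^(D+1) with hWdef
    have hW0 : 0 ≤ W := by positivity
    have hYpow : 0 < |y n| ^ (B+G+3) := by
      rw [hY]
      have hW1 : 0 < W := by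
        rw [hWdef]
        have : 0 < |x n|^(D+1) := pow_pos hs _
        nlinarith [pow_nonneg (abs_nonneg (z n)) (B+2)]
      positivity
    have hYne : |y n| ≠ 0 := by
      intro h; rw [h] at hYpow; simp at hYpow
    have hYpos : 0 < |y n| := lt_of_le_of_ne (abs_nonneg (y n)) (Ne.symm hYne)
    have hfz : |fzR (B+2) (B+G+3+A) (x n) (z n)| = (B+2:ℝ) * (|z n|^(B+1) * |x n|^(B+G+3+A)) := by
      rw [fzR, show B+2-1 = B+1 from by omega, abs_mul, abs_mul, abs_neg, abs_pow, abs_pow,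
        Nat.abs_cast]
      push_cast; ring
    have hfy : |fyR (B+G+3) (y n)| = (B+G+3:ℝ) * |y n|^(B+G+2) := by
      rw [fyR, show B+G+3-1 = B+G+2 from by omega, abs_mul, abs_pow, Nat.abs_cast]
      push_cast; ring
    have hFpos : 0 < |fyR (B+G+3) (y n)| := by
      rw [hfy]; positivity
    have hgradF : |fyR (B+G+3) (y n)| ≤
        gradNormR (B+G+3) (B+2) (B+G+3+A) (B+G+3+A+(D+1)) (x n) (y n) (z n) :=
      abs_mid_le_nrm3 _ _ _
    have hgradpos : 0 < gradNormR (B+G+3) (B+2) (B+G+3+A) (B+G+3+A+(D+1)) (x n) (y n) (z n) :=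
      lt_of_lt_of_le hFpos hgradF
    have h2 : |z n|^((B+2)*((B+G+3)*(B+1))) * |x n|^((D+1)*(G+1)) ≤
        W^((B+G+2)*(B+2)) := by
      have h3 := mul_pow_le_add_pow (pow_nonneg (abs_nonneg (z n)) (B+2))
        (pow_nonneg (abs_nonneg (x n)) (D+1)) ((B+G+3)*(B+1)) (G+1)
      calc |z n|^((B+2)*((B+G+3)*(B+1))) * |x n|^((D+1)*(G+1))
          = (|z n|^(B+2))^((B+G+3)*(B+1)) * (|x n|^(D+1))^(G+1) := by
            rw [← pow_mul, ← pow_mul]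
        _ ≤ W^((B+G+3)*(B+1)+(G+1)) := h3
        _ = W^((B+G+2)*(B+2)) := by
            rw [show (B+G+3)*(B+1)+(G+1) = (B+G+2)*(B+2) from by ring]
    have core : (|z n|^(B+1) * |x n|^(B+G+3+A)) ^ ((B+G+3)*(B+2)) ≤
        |x n| ^ E * (|y n|^(B+G+2)) ^ ((B+G+3)*(B+2)) := by
      have e4 : (B+G+3+A)*((B+G+3)*(B+2)) =
          E + ((B+G+3+A)*((B+G+2)*(B+2)) + (D+1)*(G+1)) := by
        have e5 : (B+G+3+A)*((B+G+3)*(B+2)) =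
            ((B+2)*(B+G+3+A)) + (B+G+3+A)*((B+G+2)*(B+2)) := by ring
        rw [e5, ← hE]; ring
      calc (|z n|^(B+1) * |x n|^(B+G+3+A)) ^ ((B+G+3)*(B+2))
          = |z n|^((B+2)*((B+G+3)*(B+1))) * |x n|^((B+G+3+A)*((B+G+3)*(B+2))) := by
            rw [mul_pow, ← pow_mul, ← pow_mul,
              show (B+1)*((B+G+3)*(B+2)) = (B+2)*((B+G+3)*(B+1)) from by ring]
        _ = (|x n|^E * |x n|^((B+G+3+A)*((B+G+2)*(B+2)))) *
              (|z n|^((B+2)*((B+G+3)*(B+1))) * |x n|^((D+1)*(G+1))) := by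
            rw [e4, pow_add, pow_add]; ring
        _ ≤ (|x n|^E * |x n|^((B+G+3+A)*((B+G+2)*(B+2)))) * W^((B+G+2)*(B+2)) :=
            mul_le_mul_of_nonneg_left h2 (by positivity)
        _ = |x n| ^ E * ((|x n|^(B+G+3+A))^((B+G+2)*(B+2)) * W^((B+G+2)*(B+2))) := by
            rw [← pow_mul]; ring
        _ = |x n| ^ E * (|x n|^(B+G+3+A) * W)^((B+G+2)*(B+2)) := by rw [mul_pow]
        _ = |x n| ^ E * (|y n|^(B+G+3))^((B+G+2)*(B+2)) := by rw [← hY]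
        _ = |x n| ^ E * (|y n|^(B+G+2)) ^ ((B+G+3)*(B+2)) := by
            rw [← pow_mul, ← pow_mul, show (B+G+3)*((B+G+2)*(B+2)) = (B+G+2)*((B+G+3)*(B+2)) from by ring]
    have hcast : ((B+2:ℝ)/(B+G+3))^((B+G+3)*(B+2)) * ((B+G+3:ℝ))^((B+G+3)*(B+2)) =
        (B+2:ℝ)^((B+G+3)*(B+2)) := by
      rw [div_pow, div_mul_cancel₀]
      positivity
    calc (|fzR (B+2) (B+G+3+A) (x n) (z n)| /
          gradNormR (B+G+3) (B+2) (B+G+3+A) (B+G+3+A+(D+1)) (x n) (y n) (z n)) ^ ((B+G+3)*(B+2))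
        ≤ (|fzR (B+2) (B+G+3+A) (x n) (z n)| / |fyR (B+G+3) (y n)|) ^ ((B+G+3)*(B+2)) := by
          apply pow_le_pow_left₀ (div_nonneg (abs_nonneg _) hgradpos.le)
          exact div_le_div_of_nonneg_left (abs_nonneg _) hFpos hgradF
      _ ≤ ((B+2:ℝ)/(B+G+3))^((B+G+3)*(B+2)) * |x n| ^ E := by
          rw [div_pow, div_le_iff₀ (by positivity)]
          calc |fzR (B+2) (B+G+3+A) (x n) (z n)| ^ ((B+G+3)*(B+2))
              = (B+2:ℝ)^((B+G+3)*(B+2)) *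
                  (|z n|^(B+1) * |x n|^(B+G+3+A))^((B+G+3)*(B+2)) := by rw [hfz, mul_pow]
            _ ≤ (B+2:ℝ)^((B+G+3)*(B+2)) *
                  (|x n|^E * (|y n|^(B+G+2))^((B+G+3)*(B+2))) :=
                mul_le_mul_of_nonneg_left core (by positivity)
            _ = (((B+2:ℝ)/(B+G+3))^((B+G+3)*(B+2)) * ((B+G+3:ℝ))^((B+G+3)*(B+2))) *
                  (|x n|^E * (|y n|^(B+G+2))^((B+G+3)*(B+2))) := by rw [hcast]
            _ = ((B+2:ℝ)/(B+G+3))^((B+G+3)*(B+2)) * |x n| ^ E *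
                  (((B+G+3:ℝ))^((B+G+3)*(B+2)) * (|y n|^(B+G+2))^((B+G+3)*(B+2))) :=
                rearr4 _ _ _ _
            _ = ((B+2:ℝ)/(B+G+3))^((B+G+3)*(B+2)) * |x n| ^ E *
                  |fyR (B+G+3) (y n)| ^ ((B+G+3)*(B+2)) := by rw [hfy, mul_pow]
  have h0 : ∀ n, 0 ≤ |fzR (B+2) (B+G+3+A) (x n) (z n)| /
      gradNormR (B+G+3) (B+2) (B+G+3+A) (B+G+3+A+(D+1)) (x n) (y n) (z n) :=
    fun n => div_nonneg (abs_nonneg _) (Real.sqrt_nonneg _)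
  apply tendsto_of_pow_tendsto h0 (k := (B+G+3)*(B+2))
  apply squeeze_zero (fun n => pow_nonneg (h0 n) _) key
  have hxlim : Tendsto (fun n => x n) atTop (nhds 0) :=
    (continuous_fst.tendsto _).comp hlim
  have h1 : Tendsto (fun n => |x n| ^ E) atTop (nhds 0) := by
    have h2 := (hxlim.abs).pow E
    simp only [abs_zero, zero_pow hE0.ne'] at h2
    exact h2
  have h3 := h1.const_mul (((B+2:ℝ)/(B+G+3))^((B+G+3)*(B+2)))
  simpa using h3

lemma ratioPowLe {C2 Yk M : ℝ} (k : ℕ) (C1 N : ℝ) (hC1 : 0 ≤ C1) (hC2 : 0 < C2)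
    (hYk : 0 < Yk) (hN : 0 ≤ N) (hcore : M ^ k ≤ N * Yk ^ k) :
    (C1 * M / (C2 * Yk)) ^ k ≤ (C1 / C2) ^ k * N := by
  have h1 : (C1 * M / (C2 * Yk)) ^ k = (C1/C2)^k * (M^k / Yk^k) := by
    rw [div_pow, mul_pow, mul_pow, div_pow]
    field_simp
  rw [h1]
  apply mul_le_mul_of_nonneg_left _ (by positivity)
  rw [div_le_iff₀ (by positivity)]
  exact hcore

set_option maxHeartbeats 1000000 in
lemma bpi_main (B G A D : ℕ) (hEv : Even (B+2)) (hEvD : Even (D+1)) :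
    bpiR (B+G+3) (B+2) (B+G+3+A) (B+G+3+A+(D+1)) := by
  intro x y z hX hlim hgrad
  have hxlim : Tendsto (fun n => x n) atTop (nhds 0) :=
    (continuous_fst.tendsto _).comp hlim
  have hzlim : Tendsto (fun n => z n) atTop (nhds 0) :=
    ((continuous_snd.comp continuous_snd).tendsto _).comp hlim
  -- pointwise facts
  have hx0 : ∀ n, x n ≠ 0 := by
    intro n h
    obtain ⟨hyeq, hne⟩ := hX n
    apply hne
    refine ⟨h, ?_⟩
    have h1 : y n ^ (B+G+3) = 0 := by rw [hyeq, h]; simp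
    exact pow_eq_zero_iff (by omega) |>.mp h1
  have hs : ∀ n, 0 < |x n| := fun n => abs_pos.mpr (hx0 n)
  have hY : ∀ n, |y n| ^ (B+G+3) = |x n|^(B+G+3+A) * (|z n|^(B+2) + |x n|^(D+1)) := by
    intro n
    exact y_pow_abs hEv hEvD (x n) (y n) (z n) (hX n).1
  have hYpos : ∀ n, 0 < |y n| := by
    intro n
    have hYpow : 0 < |y n| ^ (B+G+3) := by
      rw [hY n]
      have h5 : 0 < |z n|^(B+2) + |x n|^(D+1) := by
        have h6 : 0 < |x n|^(D+1) := pow_pos (hs n) _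
        nlinarith [pow_nonneg (abs_nonneg (z n)) (B+2)]
      exact mul_pos (pow_pos (hs n) _) h5
    have hYne : |y n| ≠ 0 := by
      intro h; rw [h] at hYpow; simp at hYpow
    exact lt_of_le_of_ne (abs_nonneg (y n)) (Ne.symm hYne)
  have hfy : ∀ n, |fyR (B+G+3) (y n)| = (B+G+3:ℝ) * |y n|^(B+G+2) := by
    intro n
    rw [fyR, show B+G+3-1 = B+G+2 from by omega, abs_mul, abs_pow, Nat.abs_cast]
    push_cast; ring
  have hFpos : ∀ n, 0 < |fyR (B+G+3) (y n)| := by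
    intro n; rw [hfy n]; exact mul_pos (by positivity) (pow_pos (hYpos n) _)
  -- the two comparison sequences
  have hg1nn : ∀ n, 0 ≤ ((A:ℝ) * (|z n|^(B+2) * |x n|^(B+G+2+A))) / |fyR (B+G+3) (y n)| :=
    fun n => by positivity
  have hg2nn : ∀ n, 0 ≤ (((A:ℝ)+D+1) * |x n|^(B+G+2+A+(D+1))) / |fyR (B+G+3) (y n)| :=
    fun n => by positivity
  -- pointwise bound
  have hbound : ∀ n, |x n * fxR (B+2) (B+G+3+A) (B+G+3+A+(D+1)) (x n) (z n) +
      y n * fyR (B+G+3) (y n)| /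
      (nrm2R (x n) (y n) * gradNormR (B+G+3) (B+2) (B+G+3+A) (B+G+3+A+(D+1)) (x n) (y n) (z n))
      ≤ ((A:ℝ) * (|z n|^(B+2) * |x n|^(B+G+2+A))) / |fyR (B+G+3) (y n)| +
        (((A:ℝ)+D+1) * |x n|^(B+G+2+A+(D+1))) / |fyR (B+G+3) (y n)| := by
    intro n
    have hgradF : |fyR (B+G+3) (y n)| ≤
        gradNormR (B+G+3) (B+2) (B+G+3+A) (B+G+3+A+(D+1)) (x n) (y n) (z n) :=
      abs_mid_le_nrm3 _ _ _
    have hnrm2 : |x n| ≤ nrm2R (x n) (y n) := abs_fst_le_nrm2 _ _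
    have hnum : x n * fxR (B+2) (B+G+3+A) (B+G+3+A+(D+1)) (x n) (z n) +
        y n * fyR (B+G+3) (y n) =
        -((A:ℝ) * (z n^(B+2) * x n^(B+G+3+A)) + ((A:ℝ)+D+1) * x n^(B+G+3+A+(D+1))) := by
      rw [fxR, fyR, show B+G+3+A-1 = B+G+2+A from by omega,
        show B+G+3+A+(D+1)-1 = B+G+2+A+(D+1) from by omega,
        show B+G+3-1 = B+G+2 from by omega]
      push_cast
      linear_combination ((B:ℝ)+G+3) * (hX n).1
    have hNle : |x n * fxR (B+2) (B+G+3+A) (B+G+3+A+(D+1)) (x n) (z n) +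
        y n * fyR (B+G+3) (y n)| ≤
        (A:ℝ) * (|z n|^(B+2) * |x n|^(B+G+3+A)) + ((A:ℝ)+D+1) * |x n|^(B+G+3+A+(D+1)) := by
      rw [hnum, abs_neg]
      calc |(A:ℝ) * (z n^(B+2) * x n^(B+G+3+A)) + ((A:ℝ)+D+1) * x n^(B+G+3+A+(D+1))|
          ≤ |(A:ℝ) * (z n^(B+2) * x n^(B+G+3+A))| + |((A:ℝ)+D+1) * x n^(B+G+3+A+(D+1))| :=
            abs_add_le _ _
        _ = (A:ℝ) * (|z n|^(B+2) * |x n|^(B+G+3+A)) + ((A:ℝ)+D+1) * |x n|^(B+G+3+A+(D+1)) := by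
            rw [abs_mul, abs_mul, abs_mul, abs_pow, abs_pow, abs_pow, Nat.abs_cast,
              abs_of_nonneg (show (0:ℝ) ≤ (A:ℝ)+D+1 by positivity)]
    calc |x n * fxR (B+2) (B+G+3+A) (B+G+3+A+(D+1)) (x n) (z n) + y n * fyR (B+G+3) (y n)| /
        (nrm2R (x n) (y n) * gradNormR (B+G+3) (B+2) (B+G+3+A) (B+G+3+A+(D+1)) (x n) (y n) (z n))
        ≤ ((A:ℝ) * (|z n|^(B+2) * |x n|^(B+G+3+A)) + ((A:ℝ)+D+1) * |x n|^(B+G+3+A+(D+1))) /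
          (|x n| * |fyR (B+G+3) (y n)|) := by
          apply div_le_div₀ (by positivity) hNle (mul_pos (hs n) (hFpos n))
          exact mul_le_mul hnrm2 hgradF (hFpos n).le
            (le_trans (abs_nonneg (x n)) hnrm2)
      _ = ((A:ℝ) * (|z n|^(B+2) * |x n|^(B+G+2+A))) / |fyR (B+G+3) (y n)| +
        (((A:ℝ)+D+1) * |x n|^(B+G+2+A+(D+1))) / |fyR (B+G+3) (y n)| := by
          have e1 : (A:ℝ) * (|z n|^(B+2) * |x n|^(B+G+3+A)) +
              ((A:ℝ)+D+1) * |x n|^(B+G+3+A+(D+1)) =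
              ((A:ℝ) * (|z n|^(B+2) * |x n|^(B+G+2+A)) +
                ((A:ℝ)+D+1) * |x n|^(B+G+2+A+(D+1))) * |x n| := by ring
          rw [e1, mul_comm (|x n|) (|fyR (B+G+3) (y n)|),
            mul_div_mul_right _ _ (hs n).ne', add_div]
  -- each comparison sequence tends to 0
  have hg1 : Tendsto (fun n => ((A:ℝ) * (|z n|^(B+2) * |x n|^(B+G+2+A))) / |fyR (B+G+3) (y n)|) atTop (nhds 0) := by
    apply tendsto_of_pow_tendsto hg1nn (k := B+G+3)
    apply squeeze_zero (fun n => pow_nonneg (hg1nn n) _)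
      (g := fun n => ((A:ℝ)/(B+G+3))^(B+G+3) * (|z n|^(B+2) * |x n|^A))
    · intro n
      have core1 : (|z n|^(B+2) * |x n|^(B+G+2+A))^(B+G+3) ≤
          (|z n|^(B+2) * |x n|^A) * ((|y n|^(B+G+2))^(B+G+3)) := by
        calc (|z n|^(B+2) * |x n|^(B+G+2+A))^(B+G+3)
            = |z n|^(B+2) * |x n|^A * ((|x n|^(B+G+3+A) * |z n|^(B+2))^(B+G+2)) := by
              ring
          _ ≤ |z n|^(B+2) * |x n|^A *
                ((|x n|^(B+G+3+A) * (|z n|^(B+2) + |x n|^(D+1)))^(B+G+2)) := by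
              apply mul_le_mul_of_nonneg_left _ (by positivity)
              apply pow_le_pow_left₀ (by positivity)
              apply mul_le_mul_of_nonneg_left _ (by positivity)
              exact le_add_of_nonneg_right (by positivity)
          _ = |z n|^(B+2) * |x n|^A * ((|y n|^(B+G+3))^(B+G+2)) := by rw [← hY n]
          _ = (|z n|^(B+2) * |x n|^A) * ((|y n|^(B+G+2))^(B+G+3)) := by
              rw [← pow_mul, ← pow_mul, show (B+G+3)*(B+G+2) = (B+G+2)*(B+G+3) from by ring]
      have := ratioPowLe (B+G+3) (A:ℝ) (|z n|^(B+2) * |x n|^A)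
        (Nat.cast_nonneg A) (show (0:ℝ) < (B+G+3:ℝ) by positivity)
        (pow_pos (hYpos n) (B+G+2)) (by positivity) core1
      rw [show |fyR (B+G+3) (y n)| = (B+G+3:ℝ) * |y n|^(B+G+2) from hfy n]
      exact this
    · have h2 := (hzlim.abs.pow (B+2)).mul (hxlim.abs.pow A)
      simp only [abs_zero, zero_pow (show B+2 ≠ 0 by omega), zero_mul] at h2
      have h3 := h2.const_mul (((A:ℝ)/(B+G+3))^(B+G+3))
      simpa using h3
  have hg2 : Tendsto (fun n => (((A:ℝ)+D+1) * |x n|^(B+G+2+A+(D+1))) / |fyR (B+G+3) (y n)|) atTop (nhds 0) := by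
    apply tendsto_of_pow_tendsto hg2nn (k := B+G+3)
    apply squeeze_zero (fun n => pow_nonneg (hg2nn n) _)
      (g := fun n => (((A:ℝ)+D+1)/(B+G+3))^(B+G+3) * |x n|^(A+D+1))
    · intro n
      have core2 : (|x n|^(B+G+2+A+(D+1)))^(B+G+3) ≤
          |x n|^(A+D+1) * ((|y n|^(B+G+2))^(B+G+3)) := by
        calc (|x n|^(B+G+2+A+(D+1)))^(B+G+3)
            = |x n|^(A+D+1) * ((|x n|^(B+G+3+A) * |x n|^(D+1))^(B+G+2)) := by
              ring
          _ ≤ |x n|^(A+D+1) *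
                ((|x n|^(B+G+3+A) * (|z n|^(B+2) + |x n|^(D+1)))^(B+G+2)) := by
              apply mul_le_mul_of_nonneg_left _ (by positivity)
              apply pow_le_pow_left₀ (by positivity)
              apply mul_le_mul_of_nonneg_left _ (by positivity)
              exact le_add_of_nonneg_left (by positivity)
          _ = |x n|^(A+D+1) * ((|y n|^(B+G+3))^(B+G+2)) := by rw [← hY n]
          _ = |x n|^(A+D+1) * ((|y n|^(B+G+2))^(B+G+3)) := by
              rw [← pow_mul, ← pow_mul, show (B+G+3)*(B+G+2) = (B+G+2)*(B+G+3) from by ring]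
      have := ratioPowLe (B+G+3) ((A:ℝ)+D+1) (|x n|^(A+D+1))
        (by positivity) (show (0:ℝ) < (B+G+3:ℝ) by positivity)
        (pow_pos (hYpos n) (B+G+2)) (by positivity) core2
      rw [show |fyR (B+G+3) (y n)| = (B+G+3:ℝ) * |y n|^(B+G+2) from hfy n]
      exact this
    · have h2 := hxlim.abs.pow (A+D+1)
      simp only [abs_zero, zero_pow (show A+D+1 ≠ 0 by omega)] at h2
      have h3 := h2.const_mul ((((A:ℝ)+D+1)/(B+G+3))^(B+G+3))
      simpa using h3
  have hsum := hg1.add hg2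
  rw [add_zero] at hsum
  exact squeeze_zero (fun n => div_nonneg (abs_nonneg _)
    (mul_nonneg (Real.sqrt_nonneg _) (Real.sqrt_nonneg _))) hbound hsum

set_option maxHeartbeats 1000000 in
lemma w_fail (B G A D : ℕ) (hwn : (B+2)*A < (G+1)*(D+1)) :
    ¬ wRegR (B+G+3) (B+2) (B+G+3+A) (B+G+3+A+(D+1)) := by
  rintro ⟨C, hC, ε, hε, hball⟩
  -- integer exponent data
  obtain ⟨m, n, q, hm1, hn1, hF1, hqa, hqn, hqnm⟩ :
      ∃ m n q : ℕ, 0 < m ∧ 0 < n ∧ m*(B+2) ≤ n*(D+1) ∧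
        (B+G+3)*q = m*(B+2)+n*(B+G+3+A) ∧ n+1 ≤ q ∧ q+1 ≤ n+m := by
    refine ⟨(B+G+3)*((D+1)*(A+1)), (B+G+3)*((B+2)*(A+1)+1),
      (D+1)*(A+1)*(B+2) + ((B+2)*(A+1)+1)*(B+G+3+A),
      Nat.mul_pos (by omega) (Nat.mul_pos (by omega) (by omega)),
      Nat.mul_pos (by omega) (by omega),
      ?_, by ring, ?_, ?_⟩
    · calc (B+G+3)*((D+1)*(A+1))*(B+2) = ((B+G+3)*(D+1))*((A+1)*(B+2)) := by ring
        _ ≤ ((B+G+3)*(D+1))*((B+2)*(A+1)+1) :=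
          Nat.mul_le_mul_left _ (Nat.le_succ_of_le (Nat.le_of_eq (Nat.mul_comm _ _)))
        _ = (B+G+3)*((B+2)*(A+1)+1)*(D+1) := by ring
    · have h1 : 1 ≤ (D+1)*(A+1)*(B+2) :=
        Nat.mul_pos (Nat.mul_pos (by omega) (by omega)) (by omega)
      have e : ((B+2)*(A+1)+1)*(B+G+3+A) =
          (B+G+3)*((B+2)*(A+1)+1) + A*((B+2)*(A+1)+1) := by ring
      linarith [Nat.zero_le (A*((B+2)*(A+1)+1))]
    · have h7 : ((B+2)*A+1)*(A+1) ≤ (G+1)*(D+1)*(A+1) := mul_le_mul_left hwn (A+1)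
      nlinarith [h7]
  -- the real parameter u
  set M : ℝ := (((B:ℝ)+G+3+A) + ((B:ℝ)+G+A+D+4)) + ((B:ℝ)+G+3)*2^(B+G+3) + ((B:ℝ)+2)
    with hMdef
  have hM0 : 0 < M := by positivity
  set u : ℝ := min (ε/8) (min (1/2) (((B:ℝ)+2) / (3*C*M+1))) with hudef
  have hu0 : 0 < u := by
    apply lt_min (by positivity)
    apply lt_min (by norm_num)
    positivity
  have huε : u ≤ ε/8 := min_le_left _ _
  have hu2 : u ≤ 1/2 := le_trans (min_le_right _ _) (min_le_left _ _)
  have hu3 : u ≤ ((B:ℝ)+2) / (3*C*M+1) := le_trans (min_le_right _ _) (min_le_right _ _)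
  have hu1 : u ≤ 1 := hu2.trans (by norm_num)
  -- construct the point
  obtain ⟨Y, hy0, hypow, hylb, hyub⟩ :
      ∃ Y : ℝ, 0 < Y ∧
        Y^(B+G+3) = u^(m*(B+2)+n*(B+G+3+A)) + u^(n*(B+G+3+A+(D+1))) ∧
        u^q ≤ Y ∧ Y ≤ 2*u^q := by
    have hr0 : 0 < u^(m*(B+2)+n*(B+G+3+A)) + u^(n*(B+G+3+A+(D+1))) := by
      have := pow_pos hu0 (m*(B+2)+n*(B+G+3+A))
      have := pow_pos hu0 (n*(B+G+3+A+(D+1)))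
      linarith
    have hexp : q*(B+G+3) = m*(B+2)+n*(B+G+3+A) := by rw [mul_comm]; exact hqa
    refine ⟨(u^(m*(B+2)+n*(B+G+3+A)) + u^(n*(B+G+3+A+(D+1)))) ^ (((B+G+3:ℕ):ℝ))⁻¹,
      Real.rpow_pos_of_pos hr0 _, Real.rpow_inv_natCast_pow hr0.le (by omega), ?_, ?_⟩
    · have h1 : (u^q)^(B+G+3) ≤ u^(m*(B+2)+n*(B+G+3+A)) + u^(n*(B+G+3+A+(D+1))) := by
        rw [← pow_mul, hexp]
        exact le_add_of_nonneg_right (pow_nonneg hu0.le _)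
      calc u^q = ((u^q)^(B+G+3)) ^ (((B+G+3:ℕ):ℝ))⁻¹ :=
            (Real.pow_rpow_inv_natCast (pow_nonneg hu0.le q) (by omega)).symm
        _ ≤ _ := Real.rpow_le_rpow (pow_nonneg (pow_nonneg hu0.le q) _) h1 (by positivity)
    · have h2 : u^(m*(B+2)+n*(B+G+3+A)) + u^(n*(B+G+3+A+(D+1))) ≤ 2*(u^q)^(B+G+3) := by
        rw [← pow_mul, hexp, two_mul]
        apply add_le_add_right
        apply pow_le_pow_of_le_one hu0.le hu1
        calc m*(B+2)+n*(B+G+3+A) ≤ n*(D+1) + n*(B+G+3+A) := Nat.add_le_add_right hF1 _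
          _ = n*(B+G+3+A+(D+1)) := by ring
      calc (u^(m*(B+2)+n*(B+G+3+A)) + u^(n*(B+G+3+A+(D+1)))) ^ (((B+G+3:ℕ):ℝ))⁻¹
          ≤ (2*(u^q)^(B+G+3)) ^ (((B+G+3:ℕ):ℝ))⁻¹ :=
            Real.rpow_le_rpow hr0.le h2 (by positivity)
        _ = (2:ℝ)^(((B+G+3:ℕ):ℝ))⁻¹ * ((u^q)^(B+G+3))^(((B+G+3:ℕ):ℝ))⁻¹ :=
            Real.mul_rpow (by norm_num) (pow_nonneg (pow_nonneg hu0.le q) _)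
        _ = (2:ℝ)^(((B+G+3:ℕ):ℝ))⁻¹ * u^q := by
            rw [Real.pow_rpow_inv_natCast (pow_nonneg hu0.le q) (by omega)]
        _ ≤ 2 * u^q := by
            apply mul_le_mul_of_nonneg_right _ (pow_nonneg hu0.le q)
            calc (2:ℝ)^(((B+G+3:ℕ):ℝ))⁻¹ ≤ (2:ℝ)^(1:ℝ) := by
                  apply Real.rpow_le_rpow_of_exponent_le one_le_two
                  rw [inv_le_one₀ (by exact_mod_cast Nat.succ_le_of_lt (by omega))]
                  exact_mod_cast Nat.one_le_iff_ne_zero.mpr (by omega)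
              _ = 2 := Real.rpow_one 2
  -- the point is in X
  have hinX : inXR (B+G+3) (B+2) (B+G+3+A) (B+G+3+A+(D+1)) (u^n) Y (u^m) := by
    constructor
    · rw [hypow, ← pow_mul, ← pow_mul, ← pow_mul, ← pow_add]
    · rintro ⟨h, -⟩
      exact absurd h (by positivity)
  -- the gradient is nonzero
  have hfypos : 0 < fyR (B+G+3) Y := by
    rw [fyR, show B+G+3-1 = B+G+2 from by omega]
    exact mul_pos (by positivity) (pow_pos hy0 _)
  have hgradne : gradNeR (B+G+3) (B+2) (B+G+3+A) (B+G+3+A+(D+1)) (u^n) Y (u^m) :=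
    fun h => hfypos.ne' h.2.1
  -- the point is within ε
  have hnrm : nrm3R (u^n) Y (u^m) < ε := by
    have h1 := nrm3_le_sum (u^n) Y (u^m)
    rw [abs_of_nonneg (pow_nonneg hu0.le n), abs_of_pos hy0,
      abs_of_nonneg (pow_nonneg hu0.le m)] at h1
    have h2 : u^n ≤ u := pow_le_of_le_one hu0.le hu1 hn1.ne'
    have h3 : u^m ≤ u := pow_le_of_le_one hu0.le hu1 hm1.ne'
    have h4 : u^q ≤ u := pow_le_of_le_one hu0.le hu1 (by omega)
    have h5 : Y ≤ 2*u := le_trans hyub (by linarith)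
    linarith
  -- exact value of |fz|
  have hfzval : |fzR (B+2) (B+G+3+A) (u^n) (u^m)| = ((B:ℝ)+2) * u^(m*(B+1)+n*(B+G+3+A)) := by
    have h1 : fzR (B+2) (B+G+3+A) (u^n) (u^m) =
        -(((B:ℝ)+2) * u^(m*(B+1)+n*(B+G+3+A))) := by
      rw [fzR, show B+2-1 = B+1 from by omega]
      push_cast
      ring
    rw [h1, abs_neg, abs_of_nonneg (by positivity)]
  -- upper bound on nrm2
  have hnrm2ub : nrm2R (u^n) Y ≤ 3*u^n := by
    have h1 := nrm2_le_sum (u^n) Y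
    rw [abs_of_nonneg (pow_nonneg hu0.le n), abs_of_pos hy0] at h1
    have h2 : u^q ≤ u^n := pow_le_pow_of_le_one hu0.le hu1 (by omega)
    linarith
  -- upper bound on the gradient
  have hfxub : |fxR (B+2) (B+G+3+A) (B+G+3+A+(D+1)) (u^n) (u^m)| ≤
      (((B:ℝ)+G+3+A) + ((B:ℝ)+G+A+D+4)) * u^(m*(B+2)+n*(B+G+2+A)) := by
    have h1 : fxR (B+2) (B+G+3+A) (B+G+3+A+(D+1)) (u^n) (u^m) =
        -(((B:ℝ)+G+3+A) * u^(m*(B+2)+n*(B+G+2+A)) +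
          ((B:ℝ)+G+A+D+4) * u^(n*(B+G+2+A+(D+1)))) := by
      rw [fxR, show B+G+3+A-1 = B+G+2+A from by omega,
        show B+G+3+A+(D+1)-1 = B+G+2+A+(D+1) from by omega]
      push_cast
      ring
    rw [h1, abs_neg, abs_of_nonneg (by positivity)]
    have h2 : u^(n*(B+G+2+A+(D+1))) ≤ u^(m*(B+2)+n*(B+G+2+A)) := by
      apply pow_le_pow_of_le_one hu0.le hu1
      calc m*(B+2)+n*(B+G+2+A) ≤ n*(D+1) + n*(B+G+2+A) := Nat.add_le_add_right hF1 _
        _ = n*(B+G+2+A+(D+1)) := by ring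
    nlinarith [pow_nonneg hu0.le (m*(B+2)+n*(B+G+2+A)), pow_nonneg hu0.le (n*(B+G+2+A+(D+1)))]
  have hfyub : |fyR (B+G+3) Y| ≤ ((B:ℝ)+G+3)*2^(B+G+3) * u^(q*(B+G+2)) := by
    rw [abs_of_pos hfypos, fyR, show B+G+3-1 = B+G+2 from by omega]
    push_cast
    calc ((B:ℝ)+G+3) * Y^(B+G+2) ≤ ((B:ℝ)+G+3) * (2*u^q)^(B+G+2) := by
          apply mul_le_mul_of_nonneg_left _ (by positivity)
          exact pow_le_pow_left₀ hy0.le hyub _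
      _ = ((B:ℝ)+G+3) * (2^(B+G+2) * u^(q*(B+G+2))) := by rw [mul_pow, ← pow_mul]
      _ = ((B:ℝ)+G+3) * 2^(B+G+2) * u^(q*(B+G+2)) := by ring
      _ ≤ ((B:ℝ)+G+3)*2^(B+G+3) * u^(q*(B+G+2)) := by
          have h2 : (2:ℝ)^(B+G+2) ≤ 2^(B+G+3) := by
            apply pow_le_pow_right₀ one_le_two (by omega)
          exact mul_le_mul_of_nonneg_right
            (mul_le_mul_of_nonneg_left h2 (by positivity)) (pow_nonneg hu0.le _)
  have hgradub : gradNormR (B+G+3) (B+2) (B+G+3+A) (B+G+3+A+(D+1)) (u^n) Y (u^m) ≤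
      (((B:ℝ)+G+3+A) + ((B:ℝ)+G+A+D+4)) * u^(m*(B+2)+n*(B+G+2+A)) +
      ((B:ℝ)+G+3)*2^(B+G+3) * u^(q*(B+G+2)) +
      ((B:ℝ)+2) * u^(m*(B+1)+n*(B+G+3+A)) := by
    refine (nrm3_le_sum _ _ _).trans ?_
    exact add_le_add (add_le_add hfxub hfyub) (le_of_eq hfzval)
  -- exponent comparisons
  have hL1 : (m*(B+1)+n*(B+G+3+A))+1 ≤ n+(m*(B+2)+n*(B+G+2+A)) := by
    have e : n+(m*(B+2)+n*(B+G+2+A)) = (m*(B+1)+n*(B+G+3+A)) + m := by ring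
    rw [e]
    exact Nat.add_le_add_left hm1 _
  have hL2 : (m*(B+1)+n*(B+G+3+A))+1 ≤ n+q*(B+G+2) := by
    have e2 : n + q*(B+G+2) + q = n + (B+G+3)*q := by ring
    have e3 : n + (B+G+3)*q = ((m*(B+1)+n*(B+G+3+A)) + m) + n := by rw [hqa]; ring
    linarith [hqnm]
  have hL3 : (m*(B+1)+n*(B+G+3+A))+1 ≤ n+(m*(B+1)+n*(B+G+3+A)) := by
    linarith [hn1]
  -- main contradiction
  have hcontra := hball (u^n) Y (u^m) hinX hnrm hgradne
  rw [hfzval] at hcontra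
  have hub : C * nrm2R (u^n) Y *
      gradNormR (B+G+3) (B+2) (B+G+3+A) (B+G+3+A+(D+1)) (u^n) Y (u^m) ≤
      3*C*M*u^((m*(B+1)+n*(B+G+3+A))+1) := by
    have hgrad0 : (0:ℝ) ≤ gradNormR (B+G+3) (B+2) (B+G+3+A) (B+G+3+A+(D+1)) (u^n) Y (u^m) :=
      Real.sqrt_nonneg _
    calc C * nrm2R (u^n) Y * gradNormR (B+G+3) (B+2) (B+G+3+A) (B+G+3+A+(D+1)) (u^n) Y (u^m)
        ≤ (C * (3*u^n)) *
          ((((B:ℝ)+G+3+A) + ((B:ℝ)+G+A+D+4)) * u^(m*(B+2)+n*(B+G+2+A)) +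
            ((B:ℝ)+G+3)*2^(B+G+3) * u^(q*(B+G+2)) +
            ((B:ℝ)+2) * u^(m*(B+1)+n*(B+G+3+A))) := by
          apply mul_le_mul (mul_le_mul_of_nonneg_left hnrm2ub hC.le) hgradub hgrad0
          positivity
      _ = (((B:ℝ)+G+3+A) + ((B:ℝ)+G+A+D+4)) * (3*C) * u^(n+(m*(B+2)+n*(B+G+2+A))) +
          ((B:ℝ)+G+3)*2^(B+G+3) * (3*C) * u^(n+q*(B+G+2)) +
          ((B:ℝ)+2) * (3*C) * u^(n+(m*(B+1)+n*(B+G+3+A))) := by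
          rw [pow_add, pow_add, pow_add]
          ring
      _ ≤ (((B:ℝ)+G+3+A) + ((B:ℝ)+G+A+D+4)) * (3*C) * u^((m*(B+1)+n*(B+G+3+A))+1) +
          ((B:ℝ)+G+3)*2^(B+G+3) * (3*C) * u^((m*(B+1)+n*(B+G+3+A))+1) +
          ((B:ℝ)+2) * (3*C) * u^((m*(B+1)+n*(B+G+3+A))+1) := by
          have b1 := pow_le_pow_of_le_one hu0.le hu1 hL1
          have b2 := pow_le_pow_of_le_one hu0.le hu1 hL2
          have b3 := pow_le_pow_of_le_one hu0.le hu1 hL3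
          have c1 : (0:ℝ) ≤ (((B:ℝ)+G+3+A) + ((B:ℝ)+G+A+D+4)) * (3*C) := by positivity
          have c2 : (0:ℝ) ≤ ((B:ℝ)+G+3)*2^(B+G+3) * (3*C) := by positivity
          have c3 : (0:ℝ) ≤ ((B:ℝ)+2) * (3*C) := by positivity
          exact add_le_add (add_le_add (mul_le_mul_of_nonneg_left b1 c1)
            (mul_le_mul_of_nonneg_left b2 c2)) (mul_le_mul_of_nonneg_left b3 c3)
      _ = 3*C*M*u^((m*(B+1)+n*(B+G+3+A))+1) := by rw [hMdef]; ring
  have hkey2 : 3*C*M*u < (B:ℝ)+2 := by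
    have h8 : u * (3*C*M+1) ≤ (B:ℝ)+2 := by
      rw [← le_div_iff₀ (by positivity)]
      exact hu3
    nlinarith [hu0]
  have hpowpos : (0:ℝ) < u^(m*(B+1)+n*(B+G+3+A)) := pow_pos hu0 _
  have hfinal : ((B:ℝ)+2) * u^(m*(B+1)+n*(B+G+3+A)) < ((B:ℝ)+2) * u^(m*(B+1)+n*(B+G+3+A)) := by
    calc ((B:ℝ)+2) * u^(m*(B+1)+n*(B+G+3+A))
        ≤ 3*C*M*u^((m*(B+1)+n*(B+G+3+A))+1) := le_trans hcontra hub
      _ = (3*C*M*u) * u^(m*(B+1)+n*(B+G+3+A)) := by rw [pow_succ]; ring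
      _ < ((B:ℝ)+2) * u^(m*(B+1)+n*(B+G+3+A)) := mul_lt_mul_of_pos_right hkey2 hpowpos
  exact lt_irrefl _ hfinal


/-- Infinitely many real algebraic examples where Whitney (b) holds but Kuo–Verdier (w) fails. -/
theorem b_regular_w_fault_real (a b c d : ℕ) (ha : 0 < a) (hb : 0 < b) (hc : 0 < c)
    (hd : 0 < d) (ha1 : 1 < a) (hdc : c < d) (hbe : Even b) (hdce : Even (d - c))
    (hw : (b : ℤ) * |(d : ℤ) - (a : ℤ)| < (a : ℤ) * ((d : ℤ) - (c : ℤ)))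
    (hac : a ≤ c) (hbcd : b + c ≤ d) (hcase : a ≤ b ∨ d * (a - b) < a * c) :
    bRegR a b c d ∧ ¬ wRegR a b c d := by
  -- first: b < a
  have hda : a < d := lt_of_le_of_lt hac hdc
  have habs : |(d : ℤ) - (a : ℤ)| = (d : ℤ) - (a : ℤ) := by
    rw [abs_of_nonneg]
    have : (a:ℤ) ≤ d := by exact_mod_cast hda.le
    omega
  rw [habs] at hw
  have hba : b < a := by
    by_contra hcon
    push_neg at hcon
    have h2 : (a:ℤ)*((d:ℤ)-(c:ℤ)) ≤ (b:ℤ)*((d:ℤ)-(c:ℤ)) := by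
      apply mul_le_mul_of_nonneg_right
      · exact_mod_cast hcon
      · have : (c:ℤ) ≤ d := by exact_mod_cast hdc.le
        omega
    have h3 : (b:ℤ)*((d:ℤ)-(a:ℤ)) < (b:ℤ)*((d:ℤ)-(c:ℤ)) := lt_of_lt_of_le hw h2
    have h4 : (d:ℤ)-(a:ℤ) < (d:ℤ)-(c:ℤ) := by
      apply lt_of_mul_lt_mul_left h3
      positivity
    have h5 : (c:ℤ) < (a:ℤ) := by omega
    have h6 : c < a := by exact_mod_cast h5
    omega
  have hdb : d * (a - b) < a * c := hcase.resolve_left (by omega)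
  have hb2 : 2 ≤ b := by
    obtain ⟨t, ht⟩ := hbe
    omega
  obtain ⟨B, rfl⟩ : ∃ B, b = B + 2 := ⟨b - 2, by omega⟩
  obtain ⟨G, rfl⟩ : ∃ G, a = B + G + 3 := ⟨a - (B + 3), by omega⟩
  obtain ⟨A, rfl⟩ : ∃ A, c = B + G + 3 + A := ⟨c - (B + G + 3), by omega⟩
  obtain ⟨D, rfl⟩ : ∃ D, d = B + G + 3 + A + (D + 1) := ⟨d - (B + G + 3 + A) - 1, by omega⟩
  have hEvD : Even (D + 1) := by
    have e : B + G + 3 + A + (D + 1) - (B + G + 3 + A) = D + 1 := by omega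
    rwa [e] at hdce
  -- key inequality for (a)-regularity
  have hkey : (D+1)*(G+1) < (B+2)*(B+G+3+A) := by
    rw [show B + G + 3 - (B + 2) = G + 1 from by omega] at hdb
    have e1 : (B+G+3+A+(D+1))*(G+1) = (B+G+3+A)*(G+1) + (D+1)*(G+1) := by ring
    have e2 : (B+G+3)*(B+G+3+A) = (B+2)*(B+G+3+A) + (G+1)*(B+G+3+A) := by ring
    have e3 : (B+G+3+A)*(G+1) = (G+1)*(B+G+3+A) := by ring
    linarith [hdb]
  -- key inequality for (w)-failure
  have hwn : (B+2)*A < (G+1)*(D+1) := by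
    have h1 : ((B:ℤ)+2)*(((A:ℤ))+D+1) < ((B:ℤ)+G+3)*((D:ℤ)+1) := by
      push_cast at hw
      nlinarith [hw]
    have h2 : ((B:ℤ)+2)*(A:ℤ) < ((G:ℤ)+1)*((D:ℤ)+1) := by nlinarith [h1]
    exact_mod_cast h2
  exact ⟨⟨aReg_main B G A D hbe hEvD hkey, bpi_main B G A D hbe hEvD⟩,
    w_fail B G A D hwn⟩
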